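/- Let p ∈ (0,1) and a > a_* := p^p·(1−p)^(1−p), and let β < α be the two positive roots of Q_{p,a}. Define η_{p,a}(x) := −(p+1)·a·x^(1−p) − (2−p)·a·x^(−1−p) + (1−p)²·(2p+1)·x^(p+1) + 2·(4p²−4p+1)·x^(p−1) + p²·(3−2p)·x^(p−3) and Υ_p(a) := ∫_β^α η_{p,a}(x)/√(Q_{p,a}(x)) dx (an absolutely convergent improper integral). Then Υ_p(a) < 0. Consequently, every closed p-elastic curve with non-constant curvature is unstable: the second variation of Θ_p in the unit normal direction equals 2m·Υ_p(a) < 0, where m is the number of curvature periods. -/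

import Mathlib

open Real Set MeasureTheory intervalIntegral

/-- The function `Q_{p,a}(x) = a·x^(2(1−p)) − (1−p)²·x² − p²`. -/
noncomputable def Qfun (p a x : ℝ) : ℝ :=
  a * x ^ (2 * (1 - p)) - (1 - p) ^ 2 * x ^ 2 - p ^ 2

/-- The integrand `η_{p,a}` of the second variation of the `p`-elastic energy in the unit
normal direction. -/
noncomputable def etafun (p a x : ℝ) : ℝ :=
  -(p + 1) * a * x ^ (1 - p) - (2 - p) * a * x ^ (-1 - p)
    + (1 - p) ^ 2 * (2 * p + 1) * x ^ (p + 1)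
    + 2 * (4 * p ^ 2 - 4 * p + 1) * x ^ (p - 1)
    + p ^ 2 * (3 - 2 * p) * x ^ (p - 3)

/-! ### Auxiliary definitions -/

noncomputable def Qder (p a x : ℝ) : ℝ :=
  2 * (1 - p) * a * x ^ (1 - 2 * p) - 2 * (1 - p) ^ 2 * x

noncomputable def Gfun (p x : ℝ) : ℝ := -(p + 1) * x ^ p + (2 - p) * x ^ (p - 2)

noncomputable def Gder (p x : ℝ) : ℝ :=
  -(p + 1) * p * x ^ (p - 1) + (2 - p) * (p - 2) * x ^ (p - 3)

noncomputable def Rfun (p x : ℝ) : ℝ :=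
  -(p ^ 2 * (1 - p) ^ 2) * x ^ (p + 1) + p * (1 - p) * (2 * p ^ 2 - 2 * p - 1) * x ^ (p - 1)
    - p ^ 2 * (1 - p) ^ 2 * x ^ (p - 3)

/-! ### Derivatives -/

lemma hasDerivAt_Qfun (p a : ℝ) {x : ℝ} (hx : 0 < x) :
    HasDerivAt (Qfun p a) (Qder p a x) x := by
  have h1 : HasDerivAt (fun y : ℝ => y ^ (2 * (1 - p))) (2 * (1 - p) * x ^ (2 * (1 - p) - 1)) x :=
    Real.hasDerivAt_rpow_const (Or.inl hx.ne')
  have h2 : HasDerivAt (fun y : ℝ => y ^ 2) (2 * x) x := by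
    simpa using hasDerivAt_pow 2 x
  have := ((h1.const_mul a).sub (h2.const_mul ((1 - p) ^ 2))).sub_const (p ^ 2)
  refine this.congr_deriv ?_
  rw [Qder, show 2 * (1 - p) - 1 = 1 - 2 * p by ring]
  ring

lemma hasDerivAt_Gfun (p : ℝ) {x : ℝ} (hx : 0 < x) :
    HasDerivAt (Gfun p) (Gder p x) x := by
  have h1 : HasDerivAt (fun y : ℝ => y ^ p) (p * x ^ (p - 1)) x :=
    Real.hasDerivAt_rpow_const (Or.inl hx.ne')
  have h2 : HasDerivAt (fun y : ℝ => y ^ (p - 2)) ((p - 2) * x ^ (p - 2 - 1)) x :=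
    Real.hasDerivAt_rpow_const (Or.inl hx.ne')
  have := (h1.const_mul (-(p + 1))).add (h2.const_mul (2 - p))
  refine this.congr_deriv ?_
  rw [Gder, show p - 2 - 1 = p - 3 by ring]
  ring

lemma hasDerivAt_sqrtQ (p a : ℝ) {x : ℝ} (hx : 0 < x) (hQ : 0 < Qfun p a x) :
    HasDerivAt (fun y => Real.sqrt (Qfun p a y))
      (Qder p a x / (2 * Real.sqrt (Qfun p a x))) x := by
  have := (Real.hasDerivAt_sqrt hQ.ne').comp x (hasDerivAt_Qfun p a hx)
  refine this.congr_deriv ?_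
  field_simp

/-! ### The key algebraic identity -/

lemma key_identity (p a : ℝ) {x : ℝ} (hx : 0 < x) :
    Gder p x * Qfun p a x + Gfun p x * Qder p a x / 2 = etafun p a x - Rfun p x := by
  have hxne : x ≠ 0 := hx.ne'
  set u : ℝ := x ^ p with hu
  have hupos : 0 < u := Real.rpow_pos_of_pos hx p
  have e2r : x ^ (2 : ℝ) = x ^ (2 : ℕ) := by
    rw [show (2 : ℝ) = ((2 : ℕ) : ℝ) by norm_num, Real.rpow_natCast]
  have e3r : x ^ (3 : ℝ) = x ^ (3 : ℕ) := by
    rw [show (3 : ℝ) = ((3 : ℕ) : ℝ) by norm_num, Real.rpow_natCast]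
  have e1 : x ^ (p - 1) = u / x := by rw [Real.rpow_sub hx, Real.rpow_one]
  have e3 : x ^ (p - 3) = u / x ^ (3 : ℕ) := by rw [Real.rpow_sub hx, e3r]
  have e5 : x ^ (p - 2) = u / x ^ (2 : ℕ) := by rw [Real.rpow_sub hx, e2r]
  have e8 : x ^ (p + 1) = u * x := by rw [Real.rpow_add hx, Real.rpow_one]
  have e6 : x ^ (1 - p) = x / u := by rw [Real.rpow_sub hx, Real.rpow_one]
  have e7 : x ^ (-1 - p) = 1 / (x * u) := by
    rw [show -1 - p = -(1 + p) by ring, Real.rpow_neg hx.le, Real.rpow_add hx, Real.rpow_one,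
      one_div]
  have e2 : x ^ (2 * (1 - p)) = x ^ (2 : ℕ) / (u * u) := by
    rw [show 2 * (1 - p) = 2 - (p + p) by ring, Real.rpow_sub hx, Real.rpow_add hx, e2r]
  have e4 : x ^ (1 - 2 * p) = x / (u * u) := by
    rw [show 1 - 2 * p = 1 - (p + p) by ring, Real.rpow_sub hx, Real.rpow_add hx, Real.rpow_one]
  simp only [Qfun, etafun, Qder, Gfun, Gder, Rfun]
  rw [e1, e3, e5, e8, e6, e7, e2, e4]
  field_simp
  ring

/-! ### Continuity -/

lemma contAt_rpow (r : ℝ) {x : ℝ} (hx : x ≠ 0) : ContinuousAt (fun y : ℝ => y ^ r) x :=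
  Real.continuousAt_rpow_const x r (Or.inl hx)

lemma continuousAt_Qfun (p a : ℝ) {x : ℝ} (hx : x ≠ 0) : ContinuousAt (Qfun p a) x := by
  unfold Qfun
  exact ((continuousAt_const.mul (contAt_rpow _ hx)).sub
    (continuousAt_const.mul (continuousAt_pow x 2))).sub continuousAt_const

lemma continuousAt_Qder (p a : ℝ) {x : ℝ} (hx : x ≠ 0) : ContinuousAt (Qder p a) x := by
  unfold Qder
  exact (continuousAt_const.mul (contAt_rpow _ hx)).sub (continuousAt_const.mul continuousAt_id)

lemma continuousAt_etafun (p a : ℝ) {x : ℝ} (hx : x ≠ 0) : ContinuousAt (etafun p a) x := by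
  unfold etafun
  exact (((((continuousAt_const.mul continuousAt_const).mul (contAt_rpow _ hx)).sub
    ((continuousAt_const.mul continuousAt_const).mul (contAt_rpow _ hx))).add
    (continuousAt_const.mul (contAt_rpow _ hx))).add
    (continuousAt_const.mul (contAt_rpow _ hx))).add
    (continuousAt_const.mul (contAt_rpow _ hx))

lemma continuousAt_Rfun (p : ℝ) {x : ℝ} (hx : x ≠ 0) : ContinuousAt (Rfun p) x := by
  unfold Rfun
  exact ((continuousAt_const.mul (contAt_rpow _ hx)).add
    (continuousAt_const.mul (contAt_rpow _ hx))).sub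
    (continuousAt_const.mul (contAt_rpow _ hx))

lemma continuousAt_sqrtQ (p a : ℝ) {x : ℝ} (hx : x ≠ 0) :
    ContinuousAt (fun y => Real.sqrt (Qfun p a y)) x :=
  Real.continuous_sqrt.continuousAt.comp (continuousAt_Qfun p a hx)

/-! ### Negativity of `R` -/

lemma Rfun_neg {p x : ℝ} (hp0 : 0 < p) (hp1 : p < 1) (hx : 0 < x) : Rfun p x < 0 := by
  have h1 : (0:ℝ) < x ^ (p + 1) := Real.rpow_pos_of_pos hx _
  have h2 : (0:ℝ) < x ^ (p - 1) := Real.rpow_pos_of_pos hx _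
  have h3 : (0:ℝ) < x ^ (p - 3) := Real.rpow_pos_of_pos hx _
  have c3 : (0:ℝ) < p ^ 2 * (1 - p) ^ 2 :=
    mul_pos (pow_pos hp0 2) (pow_pos (by linarith) 2)
  have c1 : -(p ^ 2 * (1 - p) ^ 2) < 0 := neg_lt_zero.mpr c3
  have c2 : p * (1 - p) * (2 * p ^ 2 - 2 * p - 1) < 0 := by
    have hq : (0:ℝ) < p * (1 - p) := mul_pos hp0 (by linarith)
    have : 2 * p ^ 2 - 2 * p - 1 < 0 := by nlinarith
    exact mul_neg_of_pos_of_neg hq this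
  unfold Rfun
  have t1 : -(p ^ 2 * (1 - p) ^ 2) * x ^ (p + 1) < 0 := mul_neg_of_neg_of_pos c1 h1
  have t2 : p * (1 - p) * (2 * p ^ 2 - 2 * p - 1) * x ^ (p - 1) < 0 := mul_neg_of_neg_of_pos c2 h2
  have t3 : 0 < p ^ 2 * (1 - p) ^ 2 * x ^ (p - 3) := mul_pos c3 h3
  linarith

/-! ### Factorization and sign of `Q'` -/

lemma Qder_factor (p a : ℝ) {x : ℝ} (hx : 0 < x) :
    Qder p a x = 2 * (1 - p) * x ^ (1 - 2 * p) * (a - (1 - p) * x ^ (2 * p)) := by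
  have hxx : x ^ (1 - 2 * p) * x ^ (2 * p) = x := by
    rw [← Real.rpow_add hx, show 1 - 2 * p + 2 * p = (1:ℝ) by ring, Real.rpow_one]
  simp only [Qder]
  linear_combination (2 * (1 - p) ^ 2) * hxx

lemma aux_div (M c D S : ℝ) (hc : c ≠ 0) (hS : S ≠ 0) :
    M * D / c / S = 2 * M / c * (D / (2 * S)) := by
  field_simp

/-! ### The master integrability lemma -/

lemma integrable_div_sqrtQ (p a : ℝ) (hp0 : 0 < p) (hp1 : p < 1) (hA : 0 < a)
    (β α : ℝ) (hβ : 0 < β) (hβα : β < α)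
    (hQβ : Qfun p a β = 0) (hQα : Qfun p a α = 0)
    (hQpos : ∀ x ∈ Set.Ioo β α, 0 < Qfun p a x)
    (h : ℝ → ℝ) (hh : ∀ x : ℝ, 0 < x → ContinuousAt h x) :
    IntervalIntegrable (fun x => h x / Real.sqrt (Qfun p a x)) volume β α := by
  have hα : 0 < α := hβ.trans hβα
  have hq : 0 < 1 - p := by linarith
  have h2p : 0 < 2 * p := by linarith
  have hmid : (β + α) / 2 ∈ Ioo β α := ⟨by linarith, by linarith⟩
  have hQmid := hQpos _ hmid
  -- Claim A : (1-p) * β^(2p) < a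
  have claimA : (1 - p) * β ^ (2 * p) < a := by
    by_contra hcon
    push_neg at hcon
    have hanti : AntitoneOn (Qfun p a) (Icc β α) := by
      refine antitoneOn_of_hasDerivWithinAt_nonpos (convex_Icc β α)
        (fun x hx => (continuousAt_Qfun p a (lt_of_lt_of_le hβ hx.1).ne').continuousWithinAt)
        (f' := Qder p a) ?_ ?_
      · rw [interior_Icc]
        exact fun x hx => (hasDerivAt_Qfun p a (hβ.trans hx.1)).hasDerivWithinAt
      · rw [interior_Icc]
        intro x hx
        have hx0 : 0 < x := hβ.trans hx.1
        have hmono : β ^ (2 * p) ≤ x ^ (2 * p) := Real.rpow_le_rpow hβ.le hx.1.le h2p.le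
        have h2 : a - (1 - p) * x ^ (2 * p) ≤ 0 := by nlinarith
        rw [Qder_factor p a hx0]
        exact mul_nonpos_of_nonneg_of_nonpos
          (le_of_lt (mul_pos (by linarith) (Real.rpow_pos_of_pos hx0 _))) h2
    have := hanti (left_mem_Icc.mpr hβα.le) ⟨hmid.1.le, hmid.2.le⟩ hmid.1.le
    rw [hQβ] at this
    linarith
  -- Claim B : a < (1-p) * α^(2p)
  have claimB : a < (1 - p) * α ^ (2 * p) := by
    by_contra hcon
    push_neg at hcon
    have hmono : MonotoneOn (Qfun p a) (Icc β α) := by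
      refine monotoneOn_of_hasDerivWithinAt_nonneg (convex_Icc β α)
        (fun x hx => (continuousAt_Qfun p a (lt_of_lt_of_le hβ hx.1).ne').continuousWithinAt)
        (f' := Qder p a) ?_ ?_
      · rw [interior_Icc]
        exact fun x hx => (hasDerivAt_Qfun p a (hβ.trans hx.1)).hasDerivWithinAt
      · rw [interior_Icc]
        intro x hx
        have hx0 : 0 < x := hβ.trans hx.1
        have hmono2 : x ^ (2 * p) ≤ α ^ (2 * p) := Real.rpow_le_rpow hx0.le hx.2.le h2p.le
        have h2 : 0 ≤ a - (1 - p) * x ^ (2 * p) := by nlinarith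
        rw [Qder_factor p a hx0]
        exact mul_nonneg (le_of_lt (mul_pos (by linarith) (Real.rpow_pos_of_pos hx0 _))) h2
    have := hmono ⟨hmid.1.le, hmid.2.le⟩ (right_mem_Icc.mpr hβα.le) hmid.2.le
    rw [hQα] at this
    linarith
  -- The turning point x₀
  have haq : 0 < a / (1 - p) := div_pos hA hq
  set x₀ : ℝ := (a / (1 - p)) ^ (1 / (2 * p)) with hx₀def
  have hx₀pos : 0 < x₀ := Real.rpow_pos_of_pos haq _
  have hx₀pow : x₀ ^ (2 * p) = a / (1 - p) := by
    rw [hx₀def, ← Real.rpow_mul haq.le, one_div, inv_mul_cancel₀ h2p.ne', Real.rpow_one]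
  have hβx₀ : β < x₀ := by
    by_contra hcon
    push_neg at hcon
    have h1 : x₀ ^ (2 * p) ≤ β ^ (2 * p) := Real.rpow_le_rpow hx₀pos.le hcon h2p.le
    rw [hx₀pow] at h1
    have := (div_le_iff₀ hq).mp h1
    linarith
  have hx₀α : x₀ < α := by
    by_contra hcon
    push_neg at hcon
    have h1 : α ^ (2 * p) ≤ x₀ ^ (2 * p) := Real.rpow_le_rpow hα.le hcon h2p.le
    rw [hx₀pow] at h1
    have := (le_div_iff₀ hq).mp h1
    linarith
  set s : ℝ := (β + x₀) / 2 with hsdef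
  set t : ℝ := (x₀ + α) / 2 with htdef
  have hβs : β < s := by rw [hsdef]; linarith
  have hsx₀ : s < x₀ := by rw [hsdef]; linarith
  have hx₀t : x₀ < t := by rw [htdef]; linarith
  have htα : t < α := by rw [htdef]; linarith
  have hst : s < t := hsx₀.trans hx₀t
  have hsα : s < α := hsx₀.trans (hx₀t.trans htα)
  have hβt : β < t := hβs.trans hst
  -- sign of Qder on the two side intervals
  have hQdpos : ∀ x ∈ Icc β s, 0 < Qder p a x := by
    intro x hx
    have hx0 : 0 < x := lt_of_lt_of_le hβ hx.1
    have hlt : x ^ (2 * p) < x₀ ^ (2 * p) :=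
      Real.rpow_lt_rpow hx0.le (lt_of_le_of_lt hx.2 hsx₀) h2p
    rw [hx₀pow] at hlt
    have h2 : 0 < a - (1 - p) * x ^ (2 * p) := by
      have := (lt_div_iff₀ hq).mp hlt
      linarith
    rw [Qder_factor p a hx0]
    exact mul_pos (mul_pos (by linarith) (Real.rpow_pos_of_pos hx0 _)) h2
  have hQdneg : ∀ x ∈ Icc t α, Qder p a x < 0 := by
    intro x hx
    have hx0 : 0 < x := hβ.trans (lt_of_lt_of_le hβt hx.1)
    have hlt : x₀ ^ (2 * p) < x ^ (2 * p) :=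
      Real.rpow_lt_rpow hx₀pos.le (lt_of_lt_of_le hx₀t hx.1) h2p
    rw [hx₀pow] at hlt
    have h2 : a - (1 - p) * x ^ (2 * p) < 0 := by
      have := (div_lt_iff₀ hq).mp hlt
      linarith
    rw [Qder_factor p a hx0]
    exact mul_neg_of_pos_of_neg (mul_pos (by linarith) (Real.rpow_pos_of_pos hx0 _)) h2
  -- continuity of the integrand inside
  have hfc : ∀ x ∈ Ioo β α, ContinuousAt (fun y => h y / Real.sqrt (Qfun p a y)) x := by
    intro x hx
    have hx0 : 0 < x := hβ.trans hx.1
    exact (hh x hx0).div (continuousAt_sqrtQ p a hx0.ne')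
      (Real.sqrt_pos.mpr (hQpos x hx)).ne'
  -- Piece 1 : on [β, s]
  have piece1 : IntervalIntegrable (fun x => h x / Real.sqrt (Qfun p a x)) volume β s := by
    obtain ⟨z, hz, hzmin⟩ := isCompact_Icc.exists_isMinOn (nonempty_Icc.mpr hβs.le)
      (fun x hx => (continuousAt_Qder p a (lt_of_lt_of_le hβ hx.1).ne').continuousWithinAt)
    have hc₁ : 0 < Qder p a z := hQdpos z hz
    obtain ⟨M, hM⟩ := isCompact_Icc.exists_bound_of_continuousOn
      (f := h) (fun x hx => (hh x (lt_of_lt_of_le hβ hx.1)).continuousWithinAt)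
    have hM0 : 0 ≤ M := le_trans (norm_nonneg _) (hM β (left_mem_Icc.mpr hβs.le))
    have hsub1 : Ioo β s ⊆ Ioo β α := Ioo_subset_Ioo le_rfl hsα.le
    have hg'int : IntegrableOn (fun x => Qder p a x / (2 * Real.sqrt (Qfun p a x)))
        (Ioc β s) volume := by
      refine integrableOn_deriv_of_nonneg
        (fun x hx => (continuousAt_sqrtQ p a (lt_of_lt_of_le hβ hx.1).ne').continuousWithinAt)
        (fun x hx => hasDerivAt_sqrtQ p a (hβ.trans hx.1) (hQpos x (hsub1 hx))) ?_
      intro x hx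
      exact div_nonneg (hQdpos x ⟨hx.1.le, hx.2.le⟩).le (by positivity)
    rw [intervalIntegrable_iff_integrableOn_Ioc_of_le hβs.le,
      integrableOn_Ioc_iff_integrableOn_Ioo]
    have hKint : Integrable
        (fun x => (2 * M / Qder p a z) * (Qder p a x / (2 * Real.sqrt (Qfun p a x))))
        (volume.restrict (Ioo β s)) :=
      ((hg'int.mono_set Ioo_subset_Ioc_self).const_mul _)
    refine hKint.mono ?_ ?_
    · exact (ContinuousOn.aestronglyMeasurable
        (fun x hx => (hfc x (hsub1 hx)).continuousWithinAt) measurableSet_Ioo)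
    · rw [ae_restrict_iff' measurableSet_Ioo]
      refine ae_of_all _ fun x hx => ?_
      have hx0 : 0 < x := hβ.trans hx.1
      have hQx : 0 < Qfun p a x := hQpos x (hsub1 hx)
      have hsq : 0 < Real.sqrt (Qfun p a x) := Real.sqrt_pos.mpr hQx
      have hd : 0 < Qder p a x := hQdpos x ⟨hx.1.le, hx.2.le⟩
      have habs : |h x| ≤ M := by
        have := hM x ⟨hx.1.le, hx.2.le⟩; rwa [Real.norm_eq_abs] at this
      have key : |h x| / Real.sqrt (Qfun p a x)
          ≤ 2 * M / Qder p a z * (Qder p a x / (2 * Real.sqrt (Qfun p a x))) := by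
        have h2 : Qder p a z ≤ Qder p a x := hzmin ⟨hx.1.le, hx.2.le⟩
        have h1 : |h x| ≤ M * Qder p a x / Qder p a z := by
          rw [le_div_iff₀ hc₁]
          nlinarith [abs_nonneg (h x)]
        calc |h x| / Real.sqrt (Qfun p a x)
            ≤ (M * Qder p a x / Qder p a z) / Real.sqrt (Qfun p a x) := by gcongr
          _ = 2 * M / Qder p a z * (Qder p a x / (2 * Real.sqrt (Qfun p a x))) :=
              aux_div M _ _ _ hc₁.ne' hsq.ne'
      rw [Real.norm_eq_abs, Real.norm_eq_abs, abs_div, abs_of_pos hsq]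
      exact le_trans key (le_abs_self _)
  -- Piece 3 : on [t, α]
  have piece3 : IntervalIntegrable (fun x => h x / Real.sqrt (Qfun p a x)) volume t α := by
    have ht0 : 0 < t := hβ.trans hβt
    obtain ⟨z, hz, hzmin⟩ := isCompact_Icc.exists_isMinOn (nonempty_Icc.mpr htα.le)
      (f := fun x => -Qder p a x)
      (fun x hx => ((continuousAt_Qder p a (ht0.trans_le hx.1).ne').neg).continuousWithinAt)
    have hc₁ : 0 < -Qder p a z := neg_pos.mpr (hQdneg z hz)
    obtain ⟨M, hM⟩ := isCompact_Icc.exists_bound_of_continuousOn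
      (f := h) (fun x hx => (hh x (ht0.trans_le hx.1)).continuousWithinAt)
    have hM0 : 0 ≤ M := le_trans (norm_nonneg _) (hM t (left_mem_Icc.mpr htα.le))
    have hsub1 : Ioo t α ⊆ Ioo β α := Ioo_subset_Ioo hβt.le le_rfl
    have hg'int : IntegrableOn (fun x => -(Qder p a x / (2 * Real.sqrt (Qfun p a x))))
        (Ioc t α) volume := by
      refine integrableOn_deriv_of_nonneg
        (g := fun y => -Real.sqrt (Qfun p a y))
        (fun x hx => ((continuousAt_sqrtQ p a (ht0.trans_le hx.1).ne').neg).continuousWithinAt)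
        (fun x hx => (hasDerivAt_sqrtQ p a (ht0.trans hx.1) (hQpos x (hsub1 hx))).neg) ?_
      intro x hx
      have : Qder p a x < 0 := hQdneg x ⟨hx.1.le, hx.2.le⟩
      have h2 : 0 ≤ Real.sqrt (Qfun p a x) := Real.sqrt_nonneg _
      rw [neg_nonneg]
      exact div_nonpos_of_nonpos_of_nonneg this.le (by positivity)
    rw [intervalIntegrable_iff_integrableOn_Ioc_of_le htα.le,
      integrableOn_Ioc_iff_integrableOn_Ioo]
    have hKint : Integrable
        (fun x => (2 * M / (-Qder p a z)) * (-(Qder p a x / (2 * Real.sqrt (Qfun p a x)))))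
        (volume.restrict (Ioo t α)) :=
      ((hg'int.mono_set Ioo_subset_Ioc_self).const_mul _)
    refine hKint.mono ?_ ?_
    · exact (ContinuousOn.aestronglyMeasurable
        (fun x hx => (hfc x (hsub1 hx)).continuousWithinAt) measurableSet_Ioo)
    · rw [ae_restrict_iff' measurableSet_Ioo]
      refine ae_of_all _ fun x hx => ?_
      have hx0 : 0 < x := ht0.trans hx.1
      have hQx : 0 < Qfun p a x := hQpos x (hsub1 hx)
      have hsq : 0 < Real.sqrt (Qfun p a x) := Real.sqrt_pos.mpr hQx
      have hd : 0 < -Qder p a x := neg_pos.mpr (hQdneg x ⟨hx.1.le, hx.2.le⟩)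
      have habs : |h x| ≤ M := by
        have := hM x ⟨hx.1.le, hx.2.le⟩; rwa [Real.norm_eq_abs] at this
      have key : |h x| / Real.sqrt (Qfun p a x)
          ≤ 2 * M / (-Qder p a z) * (-(Qder p a x / (2 * Real.sqrt (Qfun p a x)))) := by
        have h2 : -Qder p a z ≤ -Qder p a x := hzmin ⟨hx.1.le, hx.2.le⟩
        have h1 : |h x| ≤ M * (-Qder p a x) / (-Qder p a z) := by
          rw [le_div_iff₀ hc₁]
          nlinarith [abs_nonneg (h x)]
        calc |h x| / Real.sqrt (Qfun p a x)
            ≤ (M * (-Qder p a x) / (-Qder p a z)) / Real.sqrt (Qfun p a x) := by gcongr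
          _ = 2 * M / (-Qder p a z) * (-(Qder p a x / (2 * Real.sqrt (Qfun p a x)))) := by
              rw [aux_div M _ _ _ hc₁.ne' hsq.ne']; ring
      rw [Real.norm_eq_abs, Real.norm_eq_abs, abs_div, abs_of_pos hsq]
      exact le_trans key (le_abs_self _)
  -- Piece 2 : on [s, t]
  have piece2 : IntervalIntegrable (fun x => h x / Real.sqrt (Qfun p a x)) volume s t := by
    apply ContinuousOn.intervalIntegrable
    intro x hx
    rw [uIcc_of_le hst.le] at hx
    have hmem : x ∈ Ioo β α := ⟨lt_of_lt_of_le hβs hx.1, lt_of_le_of_lt hx.2 htα⟩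
    exact (hfc x hmem).continuousWithinAt
  exact (piece1.trans piece2).trans piece3

/-! ### Main theorem -/

theorem pElastic_unstable (p a : ℝ) (hp : p ∈ Set.Ioo (0 : ℝ) 1)
    (ha : p ^ p * (1 - p) ^ (1 - p) < a)
    (β α : ℝ) (hβ : 0 < β) (hβα : β < α)
    (hQβ : Qfun p a β = 0) (hQα : Qfun p a α = 0)
    (hQpos : ∀ x ∈ Set.Ioo β α, 0 < Qfun p a x) :
    IntervalIntegrable (fun x => etafun p a x / Real.sqrt (Qfun p a x)) volume β α ∧
    (∫ x in β..α, etafun p a x / Real.sqrt (Qfun p a x)) < 0 ∧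
    ∀ m : ℕ, 0 < m →
      2 * (m : ℝ) * ∫ x in β..α, etafun p a x / Real.sqrt (Qfun p a x) < 0 := by
  obtain ⟨hp0, hp1⟩ := hp
  have hA : 0 < a :=
    lt_trans (mul_pos (Real.rpow_pos_of_pos hp0 p) (Real.rpow_pos_of_pos (by linarith) (1 - p))) ha
  have hfint : IntervalIntegrable (fun x => etafun p a x / Real.sqrt (Qfun p a x)) volume β α :=
    integrable_div_sqrtQ p a hp0 hp1 hA β α hβ hβα hQβ hQα hQpos (etafun p a)
      (fun x hx => continuousAt_etafun p a hx.ne')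
  have hrint : IntervalIntegrable (fun x => Rfun p x / Real.sqrt (Qfun p a x)) volume β α :=
    integrable_div_sqrtQ p a hp0 hp1 hA β α hβ hβα hQβ hQα hQpos (Rfun p)
      (fun x hx => continuousAt_Rfun p hx.ne')
  have hdint : IntervalIntegrable
      (fun x => (etafun p a x - Rfun p x) / Real.sqrt (Qfun p a x)) volume β α :=
    integrable_div_sqrtQ p a hp0 hp1 hA β α hβ hβα hQβ hQα hQpos
      (fun x => etafun p a x - Rfun p x)
      (fun x hx => (continuousAt_etafun p a hx.ne').sub (continuousAt_Rfun p hx.ne'))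
  -- the FTC step
  have hFTC : (∫ x in β..α, (etafun p a x - Rfun p x) / Real.sqrt (Qfun p a x)) = 0 := by
    have hcont : ContinuousOn (fun y => Gfun p y * Real.sqrt (Qfun p a y)) (Icc β α) := by
      intro x hx
      have hx0 : 0 < x := lt_of_lt_of_le hβ hx.1
      have hG : ContinuousAt (Gfun p) x := by
        unfold Gfun
        exact (continuousAt_const.mul (contAt_rpow _ hx0.ne')).add
          (continuousAt_const.mul (contAt_rpow _ hx0.ne'))
      exact (hG.mul (continuousAt_sqrtQ p a hx0.ne')).continuousWithinAt
    have hderiv : ∀ x ∈ Ioo β α,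
        HasDerivWithinAt (fun y => Gfun p y * Real.sqrt (Qfun p a y))
          ((etafun p a x - Rfun p x) / Real.sqrt (Qfun p a x)) (Ioi x) x := by
      intro x hx
      have hx0 : 0 < x := hβ.trans hx.1
      have hQx : 0 < Qfun p a x := hQpos x hx
      have hsq : 0 < Real.sqrt (Qfun p a x) := Real.sqrt_pos.mpr hQx
      have hD := (hasDerivAt_Gfun p hx0).mul (hasDerivAt_sqrtQ p a hx0 hQx)
      have heq : Gder p x * Real.sqrt (Qfun p a x)
          + Gfun p x * (Qder p a x / (2 * Real.sqrt (Qfun p a x)))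
          = (etafun p a x - Rfun p x) / Real.sqrt (Qfun p a x) := by
        rw [← key_identity p a hx0]
        have hss : Real.sqrt (Qfun p a x) * Real.sqrt (Qfun p a x) = Qfun p a x :=
          Real.mul_self_sqrt hQx.le
        field_simp
        linear_combination (2 * Gder p x) * hss
      rw [← heq]
      exact hD.hasDerivWithinAt
    have := intervalIntegral.integral_eq_sub_of_hasDeriv_right_of_le hβα.le hcont hderiv hdint
    rw [this, hQβ, hQα, Real.sqrt_zero, mul_zero, mul_zero, sub_zero]
  -- conclude : the integral equals the integral of R/√Q
  have hsplit : (∫ x in β..α, etafun p a x / Real.sqrt (Qfun p a x))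
      = ∫ x in β..α, Rfun p x / Real.sqrt (Qfun p a x) := by
    have : (∫ x in β..α, (etafun p a x - Rfun p x) / Real.sqrt (Qfun p a x))
        = (∫ x in β..α, etafun p a x / Real.sqrt (Qfun p a x))
          - ∫ x in β..α, Rfun p x / Real.sqrt (Qfun p a x) := by
      rw [← intervalIntegral.integral_sub hfint hrint]
      congr 1
      funext x
      rw [sub_div]
    rw [this] at hFTC
    linarith
  have hRneg : (∫ x in β..α, Rfun p x / Real.sqrt (Qfun p a x)) < 0 := by
    have hrint' : IntervalIntegrable (fun x => -(Rfun p x / Real.sqrt (Qfun p a x)))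
        volume β α := by exact hrint.neg
    have hposint : 0 < ∫ x in β..α, -(Rfun p x / Real.sqrt (Qfun p a x)) := by
      apply intervalIntegral_pos_of_pos_on hrint'
      · intro x hx
        have hx0 : 0 < x := hβ.trans hx.1
        have hQx : 0 < Qfun p a x := hQpos x hx
        have : Rfun p x / Real.sqrt (Qfun p a x) < 0 :=
          div_neg_of_neg_of_pos (Rfun_neg hp0 hp1 hx0) (Real.sqrt_pos.mpr hQx)
        linarith
      · exact hβα
    rw [intervalIntegral.integral_neg] at hposint
    linarith
  have hIneg : (∫ x in β..α, etafun p a x / Real.sqrt (Qfun p a x)) < 0 := by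
    rw [hsplit]; exact hRneg
  refine ⟨hfint, hIneg, fun m hm => ?_⟩
  have : (0:ℝ) < 2 * (m:ℝ) := by positivity
  exact mul_neg_of_pos_of_neg this hIneg
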